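/- Let G be an infinite abelian 2-group (every element of G has order a power of 2) possessing exactly one subgroup of cardinality 2. Then G is isomorphic to the quasicyclic 2-group C_{2^∞}. -/

import Mathlib

open Quaternion Pointwise

/-- The quasicyclic 2-group `C_{2^∞}`: the subgroup of `ℂˣ` of all `z`
with `z ^ (2 ^ n) = 1` for some `n`. -/
def C2inf : Subgroup ℂˣ where
  carrier := {z | ∃ n : ℕ, z ^ 2 ^ n = 1}
  one_mem' := ⟨0, one_pow _⟩
  mul_mem' := by
    rintro a b ⟨n, hn⟩ ⟨m, hm⟩
    exact ⟨n + m, by rw [mul_pow, pow_add, pow_mul, hn, one_pow, one_mul, pow_mul', hm, one_pow]⟩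
  inv_mem' := by
    rintro a ⟨n, hn⟩
    exact ⟨n, by rw [inv_pow, hn, inv_one]⟩

/-- The canonical embedding of `ℂ` into the real quaternions `ℍ`. -/
noncomputable def complexToQuaternion : ℂ →ₐ[ℝ] ℍ[ℝ] :=
  Complex.lift ⟨⟨0, 1, 0, 0⟩, by ext <;> simp <;> erw [QuaternionAlgebra.mk_mul_mk] <;> norm_num⟩

/-- The quaternion `i` as a unit of `ℍ`. -/
noncomputable def quatI : ℍ[ℝ]ˣ := ⟨⟨0, 1, 0, 0⟩, -⟨0, 1, 0, 0⟩, by ext <;> simp <;> erw [QuaternionAlgebra.neg_mk, QuaternionAlgebra.mk_mul_mk] <;> norm_num, by ext <;> simp <;> erw [QuaternionAlgebra.neg_mk, QuaternionAlgebra.mk_mul_mk] <;> norm_num⟩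

/-- The quaternion `j` as a unit of `ℍ`. -/
noncomputable def quatJ : ℍ[ℝ]ˣ := ⟨⟨0, 0, 1, 0⟩, -⟨0, 0, 1, 0⟩, by ext <;> simp <;> erw [QuaternionAlgebra.neg_mk, QuaternionAlgebra.mk_mul_mk] <;> norm_num, by ext <;> simp <;> erw [QuaternionAlgebra.neg_mk, QuaternionAlgebra.mk_mul_mk] <;> norm_num⟩

/-- The quaternion `k` as a unit of `ℍ`. -/
noncomputable def quatK : ℍ[ℝ]ˣ := ⟨⟨0, 0, 0, 1⟩, -⟨0, 0, 0, 1⟩, by ext <;> simp <;> erw [QuaternionAlgebra.neg_mk, QuaternionAlgebra.mk_mul_mk] <;> norm_num, by ext <;> simp <;> erw [QuaternionAlgebra.neg_mk, QuaternionAlgebra.mk_mul_mk] <;> norm_num⟩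

/-- The 8-element quaternion group `Q₈ = {1, -1, i, -i, j, -j, k, -k}` as a set of
units of `ℍ`. -/
noncomputable def Q8 : Set ℍ[ℝ]ˣ := {1, -1, quatI, -quatI, quatJ, -quatJ, quatK, -quatK}

/-- The infinite generalized quaternion group `Q_{2^∞}`: the subgroup of `ℍˣ` generated by
the image of `C_{2^∞}` under the embedding `ℂ → ℍ` together with `Q₈`. -/
noncomputable def Q2inf : Subgroup ℍ[ℝ]ˣ :=
  Subgroup.closure ((Units.map complexToQuaternion.toMonoidHom) '' (C2inf : Set ℂˣ) ∪ Q8)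

/-- The quasicyclic group `C_{2^∞}` viewed as a subgroup of `ℍˣ` via the embedding `ℂ → ℍ`. -/
noncomputable def C2infH : Subgroup ℍ[ℝ]ˣ :=
  Subgroup.map (Units.map complexToQuaternion.toMonoidHom) C2inf

/-- Each infinite abelian 2-group with a unique 2-element subgroup is isomorphic to the
quasicyclic 2-group `C_{2^∞}`. -/
noncomputable def uroot (n : ℕ) : ℂˣ :=
  Units.mk0 (Complex.exp (2 * Real.pi * Complex.I / 2 ^ n)) (Complex.exp_ne_zero _)

lemma uroot_val_pow (n m : ℕ) :
    ((uroot n ^ m : ℂˣ) : ℂ) = Complex.exp (m * (2 * Real.pi * Complex.I / 2 ^ n)) := by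
  rw [Units.val_pow_eq_pow_val, Complex.exp_nat_mul]; rfl

lemma uroot_pow_self (n : ℕ) : uroot n ^ (2 ^ n) = 1 := by
  ext
  rw [uroot_val_pow, Units.val_one]
  have h2 : ((2:ℂ)^n) ≠ 0 := pow_ne_zero _ two_ne_zero
  have harg : ((2^n : ℕ) : ℂ) * (2 * Real.pi * Complex.I / 2 ^ n) = 2 * Real.pi * Complex.I := by
    push_cast
    field_simp
  rw [harg, Complex.exp_two_pi_mul_I]

lemma uroot_succ_sq (n : ℕ) : uroot (n + 1) ^ 2 = uroot n := by
  ext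
  rw [uroot_val_pow]
  show _ = Complex.exp (2 * Real.pi * Complex.I / 2 ^ n)
  congr 1
  have h2 : ((2:ℂ)^(n+1)) ≠ 0 := pow_ne_zero _ two_ne_zero
  have h2' : ((2:ℂ)^n) ≠ 0 := pow_ne_zero _ two_ne_zero
  push_cast
  field_simp
  ring

lemma uroot_pow_pow (n k : ℕ) : uroot (n + k) ^ (2 ^ k) = uroot n := by
  induction k with
  | zero => rw [Nat.add_zero, pow_zero, pow_one]
  | succ k ih =>
    have : n + (k + 1) = (n + k) + 1 := by omega
    rw [this, show (2:ℕ)^(k+1) = 2 * 2^k by ring, pow_mul, uroot_succ_sq, ih]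

lemma uroot_half (n : ℕ) : uroot (n + 1) ^ (2 ^ n) = -1 := by
  ext
  rw [uroot_val_pow]
  have h2 : ((2:ℂ)^(n+1)) ≠ 0 := pow_ne_zero _ two_ne_zero
  have harg : ((2^n : ℕ) : ℂ) * (2 * Real.pi * Complex.I / 2 ^ (n+1)) = Real.pi * Complex.I := by
    push_cast
    field_simp
    ring
  rw [harg, Complex.exp_pi_mul_I]
  rfl

lemma uroot_orderOf (n : ℕ) : orderOf (uroot n) = 2 ^ n := by
  cases n with
  | zero =>
    have : uroot 0 = 1 := by
      have := uroot_pow_self 0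
      rwa [pow_zero, pow_one] at this
    rw [this, orderOf_one, pow_zero]
  | succ n =>
    haveI : Fact (Nat.Prime 2) := ⟨Nat.prime_two⟩
    refine orderOf_eq_prime_pow ?_ ?_
    · rw [uroot_half]
      intro h
      have := congrArg Units.val h
      rw [Units.val_one] at this
      norm_num at this
    · exact uroot_pow_self (n + 1)

lemma zpow_pow_aux {M : Type*} [Group M] (s : M) (m : ℕ) (i : ℤ) :
    (s ^ m) ^ i = s ^ ((m : ℤ) * i) := by
  rw [← zpow_natCast s m, ← zpow_mul]


theorem aux_main (G : Type*) [CommGroup G] [Infinite G] (hG : IsPGroup 2 G)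
    (huniq : ∃! H : Subgroup G, Nat.card H = 2) : Nonempty (G ≃* C2inf) := by
  classical
  haveI : Fact (Nat.Prime 2) := ⟨Nat.prime_two⟩
  obtain ⟨H, hH, hHuniq⟩ := huniq
  have hord : ∀ x : G, ∃ k : ℕ, orderOf x = 2 ^ k := IsPGroup.iff_orderOf.mp hG
  haveI hHfin : Finite H := Nat.finite_of_card_ne_zero (by omega)
  have hHbot : H ≠ ⊥ := by
    intro h; rw [h, Subgroup.card_bot] at hH; omega
  obtain ⟨⟨t, htH⟩, ht1'⟩ := Subgroup.ne_bot_iff_exists_ne_one.mp hHbot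
  have ht1 : t ≠ 1 := by simpa [Subtype.ext_iff] using ht1'
  have ht2 : t ^ 2 = 1 := by
    have h := Subgroup.orderOf_dvd_natCard H htH
    rw [hH] at h
    exact orderOf_dvd_iff_pow_eq_one.mp h
  have htord : orderOf t = 2 := orderOf_eq_prime ht2 ht1
  have hZ : ∀ x : G, orderOf x = 2 → Subgroup.zpowers x = H := by
    intro x hx
    exact hHuniq _ (show Nat.card (Subgroup.zpowers x) = 2 by rw [Nat.card_zpowers, hx])
  have hzpow2 : t ^ (2:ℤ) = 1 := by
    rw [show ((2:ℤ)) = ((2:ℕ):ℤ) by norm_num, zpow_natCast, ht2]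
  have hmem2 : ∀ x : G, x ^ 2 = 1 → x = 1 ∨ x = t := by
    intro x hx
    by_cases hx1 : x = 1
    · exact Or.inl hx1
    right
    have hxo : orderOf x = 2 := orderOf_eq_prime hx hx1
    have hxH : x ∈ Subgroup.zpowers t := by
      rw [hZ t htord, ← hZ x hxo]; exact Subgroup.mem_zpowers x
    obtain ⟨k, hk⟩ := Subgroup.mem_zpowers_iff.mp hxH
    rcases Int.even_or_odd k with ⟨m, rfl⟩ | ⟨m, rfl⟩
    · exfalso; apply hx1
      rw [← hk, ← two_mul, zpow_mul, hzpow2, one_zpow]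
    · rw [← hk, zpow_add, zpow_mul, hzpow2, one_zpow, one_mul, zpow_one]
  -- the subgroups of elements of order dividing 2^n
  set Gn : ℕ → Subgroup G := fun n => (powMonoidHom (2 ^ n) : G →* G).ker with hGnDef
  have hmemGn : ∀ (n : ℕ) (x : G), x ∈ Gn n ↔ x ^ 2 ^ n = 1 := by
    intro n x
    simp [hGnDef, MonoidHom.mem_ker, powMonoidHom_apply]
  have hcard : ∀ n, Finite (Gn n) ∧ Nat.card (Gn n) ≤ 2 ^ n := by
    intro n
    induction n with
    | zero =>
      have hbot : Gn 0 = ⊥ := by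
        ext x
        rw [hmemGn 0 x, pow_zero, pow_one, Subgroup.mem_bot]
      rw [hbot]
      exact ⟨inferInstance, by rw [Subgroup.card_bot]; norm_num⟩
    | succ n ih =>
      obtain ⟨ihF, ihC⟩ := ih
      haveI := ihF
      set f : Gn (n+1) →* Gn n := {
        toFun := fun x => ⟨(x : G) ^ 2, by
          rw [hmemGn, ← pow_mul, show 2 * 2 ^ n = 2 ^ (n+1) by ring]
          exact (hmemGn (n+1) x).mp x.2⟩
        map_one' := by ext; simp
        map_mul' := by intro a b; ext; simp [mul_pow] } with hf
      have hker : ∀ z : f.ker, ((z : Gn (n+1)) : G) = 1 ∨ ((z : Gn (n+1)) : G) = t := by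
        intro z
        apply hmem2
        have hz := z.2
        rw [MonoidHom.mem_ker] at hz
        have := congrArg (Subtype.val) hz
        simpa [hf] using this
      set j : f.ker → Bool := fun z => decide (((z : Gn (n+1)) : G) = 1) with hjdef
      have hj : Function.Injective j := by
        intro a b hab
        have ha := hker a; have hb := hker b
        apply Subtype.ext; apply Subtype.ext
        have hab' : (((a : Gn (n+1)) : G) = 1) ↔ (((b : Gn (n+1)) : G) = 1) := by
          simpa [hjdef, decide_eq_decide] using hab
        rcases ha with h | h <;> rcases hb with h' | h'
        · rw [h, h']
        · exfalso; have := hab'.mp h; rw [h'] at this; exact ht1 this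
        · exfalso; have := hab'.mpr h'; rw [h] at this; exact ht1 this
        · rw [h, h']
      haveI hkerF : Finite f.ker := Finite.of_injective j hj
      have hkerC : Nat.card f.ker ≤ 2 := by
        have := Nat.card_le_card_of_injective j hj
        simpa using this
      have e : (Gn (n+1)) ≃ (Gn (n+1) ⧸ f.ker) × f.ker :=
        Subgroup.groupEquivQuotientProdSubgroup
      have e2 : (Gn (n+1) ⧸ f.ker) ≃ f.range := (QuotientGroup.quotientKerEquivRange f).toEquiv
      haveI : Finite (Gn (n+1) ⧸ f.ker) := Finite.of_equiv _ e2.symm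
      haveI hF : Finite (Gn (n+1)) := Finite.of_equiv _ e.symm
      refine ⟨hF, ?_⟩
      have hcc : Nat.card (Gn (n+1)) = Nat.card (Gn (n+1) ⧸ f.ker) * Nat.card f.ker := by
        rw [Nat.card_congr e, Nat.card_prod]
      have h1 : Nat.card (Gn (n+1) ⧸ f.ker) ≤ 2 ^ n := by
        rw [Nat.card_congr e2]
        exact le_trans (Subgroup.card_le_card_group (H := f.range)) ihC
      calc Nat.card (Gn (n+1)) = _ := hcc
        _ ≤ 2 ^ n * 2 := Nat.mul_le_mul h1 hkerC
        _ = 2 ^ (n+1) := by ring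
  have hex : ∀ n, ∃ x : G, orderOf x = 2 ^ n := by
    intro n
    have hne : Gn n ≠ ⊤ := by
      intro h
      haveI hfinTop : Finite (⊤ : Subgroup G) := by rw [← h]; exact (hcard n).1
      haveI : Finite G := Finite.of_equiv (⊤ : Subgroup G) Subgroup.topEquiv.toEquiv
      exact not_finite G
    obtain ⟨x, hx⟩ : ∃ x : G, x ∉ Gn n := by
      by_contra hc; push_neg at hc
      exact hne ((Subgroup.eq_top_iff' _).mpr hc)
    rw [hmemGn] at hx
    obtain ⟨k, hk⟩ := hord x
    have hkn : n < k := by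
      by_contra hle; push_neg at hle
      exact hx (orderOf_dvd_iff_pow_eq_one.mp (by rw [hk]; exact pow_dvd_pow 2 hle))
    refine ⟨x ^ 2 ^ (k - n), ?_⟩
    rw [orderOf_pow' x (by positivity), hk, Nat.gcd_eq_right (pow_dvd_pow 2 (by omega)),
      Nat.pow_div (by omega) (by norm_num)]
    congr 1
    omega
  have hcyc : ∀ (n : ℕ) (x : G), orderOf x = 2 ^ n → Gn n = Subgroup.zpowers x := by
    intro n x hx
    have hle : Subgroup.zpowers x ≤ Gn n :=
      Subgroup.zpowers_le.mpr (by rw [hmemGn, ← hx]; exact pow_orderOf_eq_one x)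
    haveI := (hcard n).1
    have hfin : ((Gn n : Set G)).Finite := Set.toFinite _
    have hle' : ((Gn n : Set G)).ncard ≤ (Subgroup.zpowers x : Set G).ncard := by
      rw [← Nat.card_coe_set_eq, ← Nat.card_coe_set_eq]
      have h1 : Nat.card (Subgroup.zpowers x) = 2 ^ n := by rw [Nat.card_zpowers, hx]
      calc Nat.card (Gn n : Set G) ≤ 2 ^ n := (hcard n).2
        _ = Nat.card (Subgroup.zpowers x : Set G) := h1.symm
    have hset : (Subgroup.zpowers x : Set G) = (Gn n : Set G) :=
      Set.eq_of_subset_of_ncard_le hle hle' hfin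
    exact (SetLike.coe_injective hset).symm
  have hsqrt : ∀ x : G, ∃ h : G, h ^ 2 = x ∧ orderOf h = 2 * orderOf x := by
    intro x
    obtain ⟨n, hn⟩ := hord x
    match n, hn with
    | 0, hn =>
      have hx1 : x = 1 := orderOf_eq_one_iff.mp (by rw [hn, pow_zero])
      exact ⟨t, by rw [hx1]; exact ht2, by rw [htord, hx1, orderOf_one]⟩
    | (m+1), hn =>
      obtain ⟨z, hz⟩ := hex (m+2)
      have hz2 : orderOf (z ^ 2) = 2 ^ (m+1) := by
        rw [orderOf_pow' z two_ne_zero, hz, Nat.gcd_eq_right ⟨2 ^ (m+1), by ring⟩]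
        simp only [pow_succ]
        omega
      have hxmem : x ∈ Gn (m+1) := by
        rw [hmemGn, ← hn]; exact pow_orderOf_eq_one x
      rw [hcyc (m+1) (z ^ 2) hz2] at hxmem
      obtain ⟨k, hk⟩ := Subgroup.mem_zpowers_iff.mp hxmem
      have hsq : (z ^ k) ^ (2:ℕ) = x := by
        rw [← hk]; group
      refine ⟨z ^ k, hsq, ?_⟩
      have hfin2 : (z ^ k) ^ 2 ^ (m+2) = 1 := by
        rw [show (2:ℕ) ^ (m+2) = 2 * 2 ^ (m+1) by ring, pow_mul, hsq, ← hn]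
        exact pow_orderOf_eq_one x
      have hnot : ¬(z ^ k) ^ 2 ^ (m+1) = 1 := by
        rw [show (2:ℕ) ^ (m+1) = 2 * 2 ^ m by ring, pow_mul, hsq]
        intro hcon
        have hdvd := orderOf_dvd_of_pow_eq_one hcon
        rw [hn] at hdvd
        have h1 := Nat.le_of_dvd (by positivity) hdvd
        have h2 : (2:ℕ) ^ m < 2 ^ (m+1) := Nat.pow_lt_pow_right (by norm_num) (by omega)
        omega
      have hres := orderOf_eq_prime_pow (p := 2) hnot hfin2
      rw [hres, hn]; ring
  choose sq hsq1 hsq2 using hsqrt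
  set g : ℕ → G := fun n => sq^[n] 1 with hgdef
  have hgs : ∀ n, g (n+1) = sq (g n) := fun n => Function.iterate_succ_apply' sq n 1
  have hgord : ∀ n, orderOf (g n) = 2 ^ n := by
    intro n
    induction n with
    | zero => simp [hgdef]
    | succ n ih => rw [hgs, hsq2, ih]; ring
  have hgsq : ∀ n, g (n+1) ^ 2 = g n := fun n => by rw [hgs]; exact hsq1 _
  have hgpow : ∀ n k, g (n + k) ^ ((2:ℕ) ^ k) = g n := by
    intro n k
    induction k with
    | zero => simp
    | succ k ih =>
      rw [show n + (k+1) = (n+k)+1 by omega, show (2:ℕ)^(k+1) = 2 * 2^k by ring,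
        pow_mul, hgsq, ih]
  have hdvd_u : ∀ (n : ℕ) (i : ℤ), (((2:ℕ)^n : ℕ) : ℤ) ∣ i → uroot n ^ i = 1 := by
    intro n i hdvd
    refine orderOf_dvd_iff_zpow_eq_one.mp ?_
    rw [uroot_orderOf]
    exact hdvd
  have hcompat' : ∀ (a k : ℕ) (i j : ℤ), g a ^ i = g (a + k) ^ j →
      uroot a ^ i = uroot (a + k) ^ j := by
    intro a k i j hij
    have hga : g a = g (a+k) ^ ((2:ℕ)^k) := (hgpow a k).symm
    have h1 : g (a+k) ^ ((((2:ℕ)^k : ℕ) : ℤ) * i) = g (a+k) ^ j := by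
      calc g (a+k) ^ ((((2:ℕ)^k : ℕ) : ℤ) * i) = (g (a+k) ^ ((2:ℕ)^k)) ^ i :=
            (zpow_pow_aux _ _ _).symm
        _ = g a ^ i := by rw [← hga]
        _ = g (a+k) ^ j := hij
    have h2 : g (a+k) ^ ((((2:ℕ)^k : ℕ) : ℤ) * i - j) = 1 := by
      rw [zpow_sub, h1]; simp
    have hdg : ((orderOf (g (a+k)) : ℕ) : ℤ) ∣ ((((2:ℕ)^k : ℕ) : ℤ) * i - j) :=
      orderOf_dvd_iff_zpow_eq_one.mpr h2
    rw [hgord] at hdg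
    have h3 : uroot (a+k) ^ ((((2:ℕ)^k : ℕ) : ℤ) * i - j) = 1 := hdvd_u _ _ hdg
    have h4 : uroot (a+k) ^ ((((2:ℕ)^k : ℕ) : ℤ) * i) = uroot (a+k) ^ j := by
      rw [zpow_sub] at h3; exact (mul_inv_eq_one.mp h3)
    calc uroot a ^ i = (uroot (a+k) ^ ((2:ℕ)^k)) ^ i := by rw [uroot_pow_pow]
      _ = uroot (a+k) ^ ((((2:ℕ)^k : ℕ) : ℤ) * i) := zpow_pow_aux _ _ _
      _ = uroot (a+k) ^ j := h4
  have hcompat : ∀ (a b : ℕ) (i j : ℤ), g a ^ i = g b ^ j → uroot a ^ i = uroot b ^ j := by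
    intro a b i j hij
    rcases le_total a b with hab | hab
    · obtain ⟨k, rfl⟩ := Nat.exists_eq_add_of_le hab
      exact hcompat' a k i j hij
    · obtain ⟨k, rfl⟩ := Nat.exists_eq_add_of_le hab
      exact (hcompat' b k j i hij.symm).symm
  have hrep : ∀ x : G, ∃ p : ℕ × ℤ, g p.1 ^ p.2 = x := by
    intro x
    obtain ⟨n, hn⟩ := hord x
    have hxmem : x ∈ Gn n := by rw [hmemGn, ← hn]; exact pow_orderOf_eq_one x
    rw [hcyc n (g n) (hgord n)] at hxmem
    obtain ⟨k, hk⟩ := Subgroup.mem_zpowers_iff.mp hxmem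
    exact ⟨(n, k), hk⟩
  choose r hr using hrep
  set φ : G → ℂˣ := fun x => uroot (r x).1 ^ (r x).2 with hφdef
  have hφspec : ∀ (x : G) (n : ℕ) (i : ℤ), g n ^ i = x → φ x = uroot n ^ i := by
    intro x n i h
    exact hcompat (r x).1 n (r x).2 i (by rw [hr x, ← h])
  have hφmul : ∀ x y, φ (x * y) = φ x * φ y := by
    intro x y
    set a := (r x).1 with ha
    set b := (r y).1 with hb
    set c := max a b with hc
    have hgc : ∀ d, d ≤ c → (g c) ^ ((2:ℕ)^(c-d)) = g d := by
      intro d hd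
      have := hgpow d (c - d)
      rwa [Nat.add_sub_cancel' hd] at this
    have huc : ∀ d, d ≤ c → (uroot c) ^ ((2:ℕ)^(c-d)) = uroot d := by
      intro d hd
      have := uroot_pow_pow d (c - d)
      rwa [Nat.add_sub_cancel' hd] at this
    have hxa : g a ^ (r x).2 = x := hr x
    have hyb : g b ^ (r y).2 = y := hr y
    have hxc : g c ^ ((((2:ℕ)^(c-a) : ℕ) : ℤ) * (r x).2) = x := by
      rw [← zpow_pow_aux, hgc a (le_max_left _ _), hxa]
    have hyc : g c ^ ((((2:ℕ)^(c-b) : ℕ) : ℤ) * (r y).2) = y := by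
      rw [← zpow_pow_aux, hgc b (le_max_right _ _), hyb]
    have hxy : g c ^ ((((2:ℕ)^(c-a) : ℕ) : ℤ) * (r x).2
        + (((2:ℕ)^(c-b) : ℕ) : ℤ) * (r y).2) = x * y := by
      rw [zpow_add, hxc, hyc]
    rw [hφspec (x * y) c _ hxy, zpow_add, hφspec x a (r x).2 hxa, hφspec y b (r y).2 hyb]
    congr 1
    · rw [← zpow_pow_aux, huc a (le_max_left _ _)]
    · rw [← zpow_pow_aux, huc b (le_max_right _ _)]
  set Φ : G →* ℂˣ := {
    toFun := φ
    map_one' := by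
      have h := hφspec 1 0 0 (by simp)
      simpa using h
    map_mul' := hφmul } with hΦdef
  have hΦapp : ∀ x, Φ x = φ x := fun _ => rfl
  have hΦmem : ∀ x, Φ x ∈ C2inf := by
    intro x
    rw [hΦapp, hφdef]
    refine Subgroup.zpow_mem _ ?_ _
    exact ⟨(r x).1, uroot_pow_self _⟩
  set ψ : G →* C2inf := Φ.codRestrict C2inf hΦmem with hψdef
  have hinj : Function.Injective ψ := by
    refine (injective_iff_map_eq_one ψ).mpr ?_
    intro x hx
    have hΦx : Φ x = 1 := by
      have := congrArg Subtype.val hx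
      simpa [hψdef] using this
    have hu1 : uroot (r x).1 ^ (r x).2 = 1 := hΦx
    have hdvd : (((2:ℕ) ^ (r x).1 : ℕ) : ℤ) ∣ (r x).2 := by
      have h := orderOf_dvd_iff_zpow_eq_one.mpr hu1
      rwa [uroot_orderOf] at h
    have hg1 : g (r x).1 ^ (r x).2 = 1 := by
      refine orderOf_dvd_iff_zpow_eq_one.mp ?_
      rw [hgord]
      exact hdvd
    rw [← hr x, hg1]
  have hsurj : Function.Surjective ψ := by
    rintro ⟨z, hz⟩
    obtain ⟨n, hzn⟩ := hz
    haveI : NeZero ((2:ℕ) ^ n) := ⟨by positivity⟩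
    have hprim : IsPrimitiveRoot ((uroot n : ℂˣ) : ℂ) (2 ^ n) := by
      constructor
      · have h := congrArg Units.val (uroot_pow_self n)
        rwa [Units.val_pow_eq_pow_val, Units.val_one] at h
      · intro l hl
        have hl' : uroot n ^ l = 1 := Units.ext (by rwa [Units.val_pow_eq_pow_val, Units.val_one])
        have h := orderOf_dvd_of_pow_eq_one hl'
        rwa [uroot_orderOf] at h
    have hz' : ((z : ℂ)) ^ (2 ^ n) = 1 := by
      have := congrArg Units.val hzn
      rwa [Units.val_pow_eq_pow_val, Units.val_one] at this
    obtain ⟨i, _, hi⟩ := hprim.eq_pow_of_pow_eq_one hz'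
    have hzi : uroot n ^ i = z := Units.ext (by rwa [Units.val_pow_eq_pow_val])
    refine ⟨g n ^ (i : ℤ), ?_⟩
    apply Subtype.ext
    show Φ (g n ^ (i : ℤ)) = z
    rw [hΦapp, hφspec (g n ^ (i : ℤ)) n i rfl, zpow_natCast, hzi]
  exact ⟨MulEquiv.ofBijective ψ ⟨hinj, hsurj⟩⟩

theorem stmt_3 (G : Type*) [Group G] [Infinite G] (hab : ∀ x y : G, x * y = y * x)
    (hG : IsPGroup 2 G) (huniq : ∃! H : Subgroup G, Nat.card H = 2) :
    Nonempty (G ≃* C2inf) := by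
  letI : CommGroup G := { ‹Group G› with mul_comm := hab }
  exact aux_main G hG huniq
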